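/- The complex matrix equation AX - X̄B = C (where X̄ is the entrywise complex conjugate of X) has a solution if and only if there exists a nonsingular complex matrix S with S̄⁻¹·[[A, C], [0, B]]·S = [[A, 0], [0, B]]. -/
import Mathlib

open Matrix Module

noncomputable section RothAux

set_option linter.unusedSectionVars false

namespace RothConj

variable {ι : Type*} [Fintype ι] [DecidableEq ι]

/-- conjugation of a complex matrix, as an ℝ-linear map -/
def conjL : Matrix ι ι ℂ →ₗ[ℝ] Matrix ι ι ℂ :=
  (Complex.conjAe.toLinearMap).mapMatrix

/-- T ↦ K * T - conj(T) * N as an ℝ-linear map -/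
def fK (K N : Matrix ι ι ℂ) : Matrix ι ι ℂ →ₗ[ℝ] Matrix ι ι ℂ :=
  LinearMap.mulLeft ℝ K - (LinearMap.mulRight ℝ N).comp conjL

lemma fK_apply (K N T : Matrix ι ι ℂ) :
    fK K N T = K * T - (T.map (starRingEnd ℂ)) * N := rfl

lemma map_one' : (1 : Matrix ι ι ℂ).map (starRingEnd ℂ) = 1 :=
  Matrix.map_one _ (map_zero _) (map_one _)

lemma map_zero' {κ : Type*} (Z : Matrix ι κ ℂ) (h : Z = 0) :
    Z.map (starRingEnd ℂ) = 0 := by subst h; ext i j; simp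

lemma map_neg' {κ : Type*} (Z : Matrix ι κ ℂ) :
    (-Z).map (starRingEnd ℂ) = -(Z.map (starRingEnd ℂ)) := by ext i j; simp

end RothConj

open RothConj

lemma finrank_inf_ker {K V W : Type*} [Field K] [AddCommGroup V] [Module K V]
    [FiniteDimensional K V] [AddCommGroup W] [Module K W]
    (p : Submodule K V) (π : V →ₗ[K] W) :
    finrank K (p.map π) + finrank K ↥(p ⊓ LinearMap.ker π) = finrank K p := by
  have h := LinearMap.finrank_range_add_finrank_ker (π.comp p.subtype)
  rw [LinearMap.range_comp, Submodule.range_subtype] at h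
  rw [← h]
  congr 1
  rw [LinearMap.ker_comp]
  have e := Submodule.equivMapOfInjective p.subtype p.injective_subtype
      (Submodule.comap p.subtype (LinearMap.ker π))
  rw [Submodule.map_comap_subtype] at e
  exact (e.finrank_eq).symm

lemma image_eq_of_dims {K V W : Type*} [Field K] [AddCommGroup V] [Module K V]
    [FiniteDimensional K V] [AddCommGroup W] [Module K W] [FiniteDimensional K W]
    (p q : Submodule K V) (π : V →ₗ[K] W)
    (hdim : finrank K p = finrank K q)
    (hker : p ⊓ LinearMap.ker π = q ⊓ LinearMap.ker π)
    (him : p.map π ≤ q.map π) : p.map π = q.map π := by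
  apply Submodule.eq_of_le_of_finrank_le him
  have h1 := finrank_inf_ker p π
  have h2 := finrank_inf_ker q π
  rw [hker] at h1
  omega

/-- block description of the kernel condition -/
lemma fK_fromBlocks_ker_iff {m n : ℕ}
    (A : Matrix (Fin m) (Fin m) ℂ) (B : Matrix (Fin n) (Fin n) ℂ)
    (C : Matrix (Fin m) (Fin n) ℂ)
    (T : Matrix (Fin m ⊕ Fin n) (Fin m ⊕ Fin n) ℂ) :
    fK (fromBlocks A C 0 B) (fromBlocks A 0 0 B) T = 0 ↔
      (A * T.toBlocks₁₁ + C * T.toBlocks₂₁ = T.toBlocks₁₁.map (starRingEnd ℂ) * A ∧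
       A * T.toBlocks₁₂ + C * T.toBlocks₂₂ = T.toBlocks₁₂.map (starRingEnd ℂ) * B ∧
       B * T.toBlocks₂₁ = T.toBlocks₂₁.map (starRingEnd ℂ) * A ∧
       B * T.toBlocks₂₂ = T.toBlocks₂₂.map (starRingEnd ℂ) * B) := by
  obtain ⟨P, Q, R, S, rfl⟩ : ∃ P Q R S, T = fromBlocks P Q R S :=
    ⟨_, _, _, _, (fromBlocks_toBlocks T).symm⟩
  rw [fK_apply, sub_eq_zero, fromBlocks_map, fromBlocks_multiply, fromBlocks_multiply,
    fromBlocks_inj]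
  simp [Matrix.mul_zero, Matrix.zero_mul, Matrix.toBlocks_fromBlocks₁₁,
    Matrix.toBlocks_fromBlocks₁₂, Matrix.toBlocks_fromBlocks₂₁, Matrix.toBlocks_fromBlocks₂₂]

end RothAux

open Matrix Module RothConj

theorem roth_conjugate_complex {m n : ℕ}
    (A : Matrix (Fin m) (Fin m) ℂ) (B : Matrix (Fin n) (Fin n) ℂ)
    (C : Matrix (Fin m) (Fin n) ℂ) :
    (∃ X : Matrix (Fin m) (Fin n) ℂ,
      A * X - X.map (starRingEnd ℂ) * B = C) ↔
    (∃ S : Matrix (Fin m ⊕ Fin n) (Fin m ⊕ Fin n) ℂ, IsUnit S ∧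
      (S.map (starRingEnd ℂ))⁻¹ * fromBlocks A C 0 B * S = fromBlocks A 0 0 B) := by
  constructor
  · rintro ⟨X, hX⟩
    refine ⟨fromBlocks 1 (-X) 0 1, ?_, ?_⟩
    · refine ⟨⟨fromBlocks 1 (-X) 0 1, fromBlocks 1 X 0 1, ?_, ?_⟩, rfl⟩ <;>
      · simp [fromBlocks_multiply, ← fromBlocks_one]
    · have hmapc : (fromBlocks 1 (-X) 0 1 :
          Matrix (Fin m ⊕ Fin n) (Fin m ⊕ Fin n) ℂ).map (starRingEnd ℂ) =
          fromBlocks 1 (-(X.map (starRingEnd ℂ))) 0 1 := by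
        rw [fromBlocks_map, map_neg', map_zero' _ rfl, map_one', map_one']
      have hinv : ((fromBlocks 1 (-X) 0 1 :
          Matrix (Fin m ⊕ Fin n) (Fin m ⊕ Fin n) ℂ).map (starRingEnd ℂ))⁻¹ =
          fromBlocks 1 (X.map (starRingEnd ℂ)) 0 1 := by
        rw [hmapc]
        apply Matrix.inv_eq_left_inv
        simp [fromBlocks_multiply, ← fromBlocks_one]
      rw [hinv, fromBlocks_multiply, fromBlocks_multiply, fromBlocks_inj]
      refine ⟨by simp, ?_, by simp, by simp⟩
      simp only [Matrix.one_mul, Matrix.mul_one, Matrix.zero_mul, Matrix.mul_zero,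
        add_zero, zero_add, Matrix.mul_neg]
      rw [← hX]
      abel
  · rintro ⟨S, hS, heq⟩
    set c := starRingEnd ℂ with hc
    set M := fromBlocks A C 0 B with hM
    set N := fromBlocks A 0 0 B with hN
    obtain ⟨u, hu⟩ := hS
    set V : Matrix (Fin m ⊕ Fin n) (Fin m ⊕ Fin n) ℂ := ↑u⁻¹ with hV
    have hSV : S * V = 1 := by rw [← hu, hV]; exact_mod_cast u.mul_inv
    have hVS : V * S = 1 := by rw [← hu, hV]; exact_mod_cast u.inv_mul
    have hSVc : S.map c * V.map c = 1 := by rw [← Matrix.map_mul, hSV, map_one']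
    have hVSc : V.map c * S.map c = 1 := by rw [← Matrix.map_mul, hVS, map_one']
    have hinv : (S.map c)⁻¹ = V.map c := Matrix.inv_eq_right_inv hSVc
    rw [hinv] at heq
    have hMS : M * S = S.map c * N := by
      rw [← heq, ← mul_assoc, ← mul_assoc, hSVc, Matrix.one_mul]
    -- the linear equivalence T ↦ S * T
    set e : Matrix (Fin m ⊕ Fin n) (Fin m ⊕ Fin n) ℂ ≃ₗ[ℝ]
        Matrix (Fin m ⊕ Fin n) (Fin m ⊕ Fin n) ℂ :=
      LinearEquiv.ofLinear (LinearMap.mulLeft ℝ S) (LinearMap.mulLeft ℝ V)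
        (by ext T; simp [LinearMap.mulLeft_apply, ← mul_assoc, hSV])
        (by ext T; simp [LinearMap.mulLeft_apply, ← mul_assoc, hVS]) with he
    have he_apply : ∀ T, e T = S * T := fun _ => rfl
    have he_symm : ∀ T, e.symm T = V * T := fun _ => rfl
    have key : ∀ T, fK M N (e T) = S.map c * (fK N N T) := by
      intro T
      rw [he_apply, fK_apply, fK_apply, Matrix.map_mul]
      simp only [Matrix.mul_sub, ← mul_assoc]
      rw [hMS]
    have hkermap : LinearMap.ker (fK M N) = (LinearMap.ker (fK N N)).map e.toLinearMap := by
      ext T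
      simp only [Submodule.mem_map, LinearMap.mem_ker, LinearEquiv.coe_coe]
      have hkey := key (e.symm T)
      rw [e.apply_symm_apply] at hkey
      constructor
      · intro h
        refine ⟨e.symm T, ?_, e.apply_symm_apply T⟩
        rw [h] at hkey
        have h2 : V.map c * (S.map c * fK N N (e.symm T)) = 0 := by
          rw [← hkey, Matrix.mul_zero]
        rwa [← mul_assoc, hVSc, Matrix.one_mul] at h2
      · rintro ⟨T₀, hT₀, rfl⟩
        rw [key T₀, hT₀, Matrix.mul_zero]
    -- projection onto the bottom block row
    set π : Matrix (Fin m ⊕ Fin n) (Fin m ⊕ Fin n) ℂ →ₗ[ℝ]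
        (Matrix (Fin n) (Fin m) ℂ × Matrix (Fin n) (Fin n) ℂ) :=
      { toFun := fun T => (T.toBlocks₂₁, T.toBlocks₂₂),
        map_add' := fun _ _ => rfl,
        map_smul' := fun _ _ => rfl } with hπ
    have hπ_apply : ∀ T, π T = (T.toBlocks₂₁, T.toBlocks₂₂) := fun _ => rfl
    have hdim : finrank ℝ (LinearMap.ker (fK M N)) = finrank ℝ (LinearMap.ker (fK N N)) := by
      rw [hkermap]
      exact LinearEquiv.finrank_map_eq e _
    have hNiff : ∀ T, fK N N T = 0 ↔
        (A * T.toBlocks₁₁ = T.toBlocks₁₁.map c * A ∧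
         A * T.toBlocks₁₂ = T.toBlocks₁₂.map c * B ∧
         B * T.toBlocks₂₁ = T.toBlocks₂₁.map c * A ∧
         B * T.toBlocks₂₂ = T.toBlocks₂₂.map c * B) := by
      intro T
      have := fK_fromBlocks_ker_iff A B 0 T
      simpa using this
    have hker : LinearMap.ker (fK M N) ⊓ LinearMap.ker π
        = LinearMap.ker (fK N N) ⊓ LinearMap.ker π := by
      ext T
      simp only [Submodule.mem_inf, LinearMap.mem_ker]
      have hzero : π T = 0 → (T.toBlocks₂₁ = 0 ∧ T.toBlocks₂₂ = 0) := by
        intro h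
        rw [hπ_apply] at h
        exact ⟨congrArg Prod.fst h, congrArg Prod.snd h⟩
      constructor
      · rintro ⟨h1, h2⟩
        obtain ⟨hz1, hz2⟩ := hzero h2
        rw [fK_fromBlocks_ker_iff] at h1
        refine ⟨(hNiff T).2 ?_, h2⟩
        rw [hz1, hz2] at h1 ⊢
        simpa using h1
      · rintro ⟨h1, h2⟩
        obtain ⟨hz1, hz2⟩ := hzero h2
        rw [hNiff] at h1
        refine ⟨?_, h2⟩
        rw [fK_fromBlocks_ker_iff]
        rw [hz1, hz2] at h1 ⊢
        simpa using h1
    have him : (LinearMap.ker (fK M N)).map π ≤ (LinearMap.ker (fK N N)).map π := by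
      rintro x hx
      obtain ⟨T, hT, rfl⟩ := Submodule.mem_map.mp hx
      rw [LinearMap.mem_ker, fK_fromBlocks_ker_iff] at hT
      rw [Submodule.mem_map]
      refine ⟨fromBlocks 0 0 T.toBlocks₂₁ T.toBlocks₂₂, ?_, ?_⟩
      · rw [LinearMap.mem_ker, hNiff]
        simp only [Matrix.toBlocks_fromBlocks₁₁, Matrix.toBlocks_fromBlocks₁₂,
          Matrix.toBlocks_fromBlocks₂₁, Matrix.toBlocks_fromBlocks₂₂]
        exact ⟨by rw [map_zero' _ rfl]; simp, by rw [map_zero' _ rfl]; simp,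
          hT.2.2.1, hT.2.2.2⟩
      · rw [hπ_apply, hπ_apply]
        simp
    have himeq := image_eq_of_dims _ _ π hdim hker him
    have hmem : ((0 : Matrix (Fin n) (Fin m) ℂ), (1 : Matrix (Fin n) (Fin n) ℂ)) ∈
        (LinearMap.ker (fK M N)).map π := by
      rw [himeq, Submodule.mem_map]
      refine ⟨fromBlocks 0 0 0 1, ?_, ?_⟩
      · rw [LinearMap.mem_ker, hNiff]
        simp only [Matrix.toBlocks_fromBlocks₁₁, Matrix.toBlocks_fromBlocks₁₂,
          Matrix.toBlocks_fromBlocks₂₁, Matrix.toBlocks_fromBlocks₂₂]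
        refine ⟨by rw [map_zero' _ rfl]; simp, by rw [map_zero' _ rfl]; simp,
          by rw [map_zero' _ rfl]; simp, by rw [map_one']; simp⟩
      · rw [hπ_apply]; simp
    obtain ⟨T, hT, hTπ⟩ := Submodule.mem_map.mp hmem
    rw [LinearMap.mem_ker, fK_fromBlocks_ker_iff] at hT
    rw [hπ_apply] at hTπ
    have h21 : T.toBlocks₂₂ = 1 := congrArg Prod.snd hTπ
    have heq2 := hT.2.1
    rw [h21, Matrix.mul_one] at heq2
    refine ⟨-(T.toBlocks₁₂), ?_⟩
    rw [map_neg', Matrix.mul_neg, Matrix.neg_mul, sub_neg_eq_add, ← heq2]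
    abel
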